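/- Let b₁, …, b_m ∈ ℤ^d. Let P be the set of pairs (c, F) where F ⊆ {1,…,m} is such that (b_i)_{i∈F} is ℚ-linearly independent and c ∈ ℤ^d satisfies c = Σ_{i∈F} c_i b_i for some rational numbers c_i > 0 (i ∈ F); in particular (0, ∅) ∈ P. On the ℚ-vector space ℚ[Δ_β] := ⊕_{(c,F)∈P} ℚ·y^{(c,F)} define a bilinear product: if (b_i)_{i∈F₁∪F₂} is ℚ-linearly independent, set y^{(c₁,F₁)} · y^{(c₂,F₂)} := (−1)^{|σ_ε|} y^{(c₁+c₂+ε, F₁∪F₂)}, where for a nonnegative rational combination c = Σ_{i∈F₁∪F₂} c_i b_i one defines ⌈c⌉ := Σ_i ⌈c_i⌉ b_i, ε := ⌈c₁⌉ + ⌈c₂⌉ − ⌈c₁+c₂⌉, and σ_ε := {i ∈ F₁∪F₂ : the coefficient of ε at b_i is nonzero}; if (b_i)_{i∈F₁∪F₂} is ℚ-linearly dependent, set the product to 0. Then this product is well defined (the resulting pair lies in P), commutative, and associative, and y^{(0,∅)} is a multiplicative unit, so ℚ[Δ_β] is a commutative associative unital ℚ-algebra. -/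

import Mathlib

open scoped BigOperators Classical

/-- The rational vector in ℚ^d associated to a lattice point of ℤ^d. -/
def castQ {d : ℕ} (v : Fin d → ℤ) : Fin d → ℚ := fun j => (v j : ℚ)

/-- N^{Δ_β}: the set of pairs (c, F) where (b_i)_{i∈F} is ℚ-linearly
independent and c ∈ ℤ^d is a strictly positive rational combination of the
b_i, i ∈ F.  (In particular (0, ∅) ∈ P.) -/
def multiFanPairs {d m : ℕ} (b : Fin m → Fin d → ℤ) :
    Set ((Fin d → ℤ) × Finset (Fin m)) :=
  {p | LinearIndependent ℚ (fun i : p.2 => castQ (b i.1)) ∧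
    ∃ γ : Fin m → ℚ, (∀ i ∈ p.2, 0 < γ i) ∧
      castQ p.1 = ∑ i ∈ p.2, γ i • castQ (b i)}

/-- The coefficients of a lattice point c as a rational combination of the
b_i, i ∈ F (zero outside F); well defined when (b_i)_{i∈F} is ℚ-linearly
independent and c lies in their span. -/
noncomputable def coeffOf {d m : ℕ} (b : Fin m → Fin d → ℤ)
    (F : Finset (Fin m)) (c : Fin d → ℤ) : Fin m → ℚ :=
  if h : ∃ γ : Fin m → ℚ, (∀ i ∉ F, γ i = 0) ∧
      castQ c = ∑ i ∈ F, γ i • castQ (b i)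
  then h.choose else 0


section Base
variable {d m : ℕ} (b : Fin m → Fin d → ℤ)

lemma castQ_add (u v : Fin d → ℤ) : castQ (u + v) = castQ u + castQ v := by
  funext j; simp [castQ]

set_option maxHeartbeats 1000000 in
lemma li_subset {F G : Finset (Fin m)} (h : F ⊆ G)
    (hG : LinearIndependent ℚ (fun i : G => castQ (b i.1))) :
    LinearIndependent ℚ (fun i : F => castQ (b i.1)) :=
  hG.comp (fun i : F => (⟨i.1, h i.2⟩ : G)) (fun a c hac => by
    simp only [Subtype.mk.injEq] at hac; exact Subtype.ext hac)

lemma li_sum_eq_zero {F : Finset (Fin m)}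
    (hF : LinearIndependent ℚ (fun i : F => castQ (b i.1)))
    {γ : Fin m → ℚ} (h0 : ∑ i ∈ F, γ i • castQ (b i) = 0) :
    ∀ i ∈ F, γ i = 0 := by
  intro i hi
  have hsum : ∑ j : F, γ j.1 • castQ (b j.1) = 0 := by
    rw [Finset.sum_coe_sort F (fun i => γ i • castQ (b i))]; exact h0
  exact Fintype.linearIndependent_iff.1 hF (fun j => γ j.1) hsum ⟨i, hi⟩

lemma rep_unique {F : Finset (Fin m)}
    (hF : LinearIndependent ℚ (fun i : F => castQ (b i.1)))
    {γ γ' : Fin m → ℚ} (hγ : ∀ i ∉ F, γ i = 0) (hγ' : ∀ i ∉ F, γ' i = 0)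
    (h : ∑ i ∈ F, γ i • castQ (b i) = ∑ i ∈ F, γ' i • castQ (b i)) : γ = γ' := by
  have key : ∀ i ∈ F, (γ - γ') i = 0 := by
    refine li_sum_eq_zero b hF ?_
    have : ∑ i ∈ F, (γ - γ') i • castQ (b i)
        = ∑ i ∈ F, γ i • castQ (b i) - ∑ i ∈ F, γ' i • castQ (b i) := by
      rw [← Finset.sum_sub_distrib]
      exact Finset.sum_congr rfl (fun i _ => by simp [sub_smul])
    rw [this, h, sub_self]
  funext i
  by_cases hi : i ∈ F
  · have := key i hi; simpa [sub_eq_zero] using this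
  · rw [hγ i hi, hγ' i hi]

lemma coeffOf_eq {F : Finset (Fin m)}
    (hF : LinearIndependent ℚ (fun i : F => castQ (b i.1)))
    {c : Fin d → ℤ} {γ : Fin m → ℚ} (hγ0 : ∀ i ∉ F, γ i = 0)
    (hrep : castQ c = ∑ i ∈ F, γ i • castQ (b i)) :
    coeffOf b F c = γ := by
  have hex : ∃ γ : Fin m → ℚ, (∀ i ∉ F, γ i = 0) ∧
      castQ c = ∑ i ∈ F, γ i • castQ (b i) := ⟨γ, hγ0, hrep⟩
  rw [coeffOf, dif_pos hex]
  exact rep_unique b hF hex.choose_spec.1 hγ0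
    (by rw [← hex.choose_spec.2, ← hrep])

lemma coeffOf_zero_outside (F : Finset (Fin m)) (c : Fin d → ℤ) :
    ∀ i ∉ F, coeffOf b F c i = 0 := by
  intro i hi
  rw [coeffOf]
  split
  · next h => exact h.choose_spec.1 i hi
  · rfl

/-- The canonical padded coefficient function of a member of `multiFanPairs`. -/
noncomputable def padCoeff {p : (Fin d → ℤ) × Finset (Fin m)}
    (hp : p ∈ multiFanPairs b) : Fin m → ℚ :=
  fun i => if i ∈ p.2 then hp.2.choose i else 0

lemma padCoeff_rep {p : (Fin d → ℤ) × Finset (Fin m)} (hp : p ∈ multiFanPairs b)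
    {F : Finset (Fin m)} (hsub : p.2 ⊆ F) :
    castQ p.1 = ∑ i ∈ F, padCoeff b hp i • castQ (b i) := by
  rw [← Finset.sum_subset hsub (fun i _ hi => by simp [padCoeff, if_neg hi])]
  rw [hp.2.choose_spec.2]
  exact Finset.sum_congr rfl (fun i hi => by simp [padCoeff, if_pos hi])

lemma coeffOf_eq_pad {p : (Fin d → ℤ) × Finset (Fin m)} (hp : p ∈ multiFanPairs b)
    {F : Finset (Fin m)} (hsub : p.2 ⊆ F)
    (hF : LinearIndependent ℚ (fun i : F => castQ (b i.1))) :
    coeffOf b F p.1 = padCoeff b hp :=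
  coeffOf_eq b hF (fun i hi => by simp [padCoeff, if_neg (fun hh => hi (hsub hh))])
    (padCoeff_rep b hp hsub)

lemma coeff_agree {p : (Fin d → ℤ) × Finset (Fin m)} (hp : p ∈ multiFanPairs b)
    {F G : Finset (Fin m)} (hsubF : p.2 ⊆ F) (hsubG : p.2 ⊆ G)
    (hF : LinearIndependent ℚ (fun i : F => castQ (b i.1)))
    (hG : LinearIndependent ℚ (fun i : G => castQ (b i.1))) :
    coeffOf b F p.1 = coeffOf b G p.1 := by
  rw [coeffOf_eq_pad b hp hsubF hF, coeffOf_eq_pad b hp hsubG hG]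

lemma mem_rep {p : (Fin d → ℤ) × Finset (Fin m)} (hp : p ∈ multiFanPairs b)
    {F : Finset (Fin m)} (hsub : p.2 ⊆ F)
    (hF : LinearIndependent ℚ (fun i : F => castQ (b i.1))) :
    (∀ i ∉ p.2, coeffOf b F p.1 i = 0) ∧ (∀ i ∈ p.2, 0 < coeffOf b F p.1 i) ∧
      castQ p.1 = ∑ i ∈ F, coeffOf b F p.1 i • castQ (b i) := by
  rw [coeffOf_eq_pad b hp hsub hF]
  exact ⟨fun i hi => by simp [padCoeff, if_neg hi],
    fun i hi => by simpa [padCoeff, if_pos hi] using hp.2.choose_spec.1 i hi,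
    padCoeff_rep b hp hsub⟩

lemma coeffOf_nonneg {p : (Fin d → ℤ) × Finset (Fin m)} (hp : p ∈ multiFanPairs b)
    {F : Finset (Fin m)} (hsub : p.2 ⊆ F)
    (hF : LinearIndependent ℚ (fun i : F => castQ (b i.1))) :
    ∀ i, 0 ≤ coeffOf b F p.1 i := by
  intro i
  by_cases hi : i ∈ p.2
  · exact le_of_lt ((mem_rep b hp hsub hF).2.1 i hi)
  · rw [(mem_rep b hp hsub hF).1 i hi]

lemma coeffOf_add {F : Finset (Fin m)}
    (hF : LinearIndependent ℚ (fun i : F => castQ (b i.1)))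
    {c₁ c₂ : Fin d → ℤ}
    (h₁ : castQ c₁ = ∑ i ∈ F, coeffOf b F c₁ i • castQ (b i))
    (h₂ : castQ c₂ = ∑ i ∈ F, coeffOf b F c₂ i • castQ (b i)) :
    coeffOf b F (c₁ + c₂) = coeffOf b F c₁ + coeffOf b F c₂ := by
  refine coeffOf_eq b hF ?_ ?_
  · intro i hi
    simp [coeffOf_zero_outside b F c₁ i hi, coeffOf_zero_outside b F c₂ i hi]
  · rw [castQ_add, h₁, h₂, ← Finset.sum_add_distrib]
    exact Finset.sum_congr rfl (fun i _ => by simp [add_smul])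

end Base
section Ceil
lemma ceil_e_nonneg (x y : ℚ) : 0 ≤ ⌈x⌉ + ⌈y⌉ - ⌈x + y⌉ := by
  have := Int.ceil_add_le x y; omega

lemma ceil_e_le_one (x y : ℚ) : ⌈x⌉ + ⌈y⌉ - ⌈x + y⌉ ≤ 1 := by
  have hx : (⌈x⌉ : ℚ) < x + 1 := Int.ceil_lt_add_one x
  have hy : (⌈y⌉ : ℚ) < y + 1 := Int.ceil_lt_add_one y
  have h2 : (⌈x⌉ + ⌈y⌉ - 2 : ℤ) < ⌈x + y⌉ := by
    rw [Int.lt_ceil]; push_cast; linarith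
  omega

lemma card_filter_eq_sum {α : Type*} {s : Finset α} {ε : α → ℤ}
    (h0 : ∀ i, 0 ≤ ε i) (h1 : ∀ i, ε i ≤ 1) [∀ x, Decidable (ε x ≠ 0)] :
    ((s.filter (fun i => ε i ≠ 0)).card : ℤ) = ∑ i ∈ s, ε i := by
  rw [← Finset.sum_filter_ne_zero s]
  rw [Finset.sum_congr rfl (fun i hi => show ε i = 1 by
    have := Finset.mem_filter.1 hi
    have := h0 i; have := h1 i; omega)]
  simp
end Ceil


/-- The coefficients of ε = ⌈c₁⌉ + ⌈c₂⌉ − ⌈c₁+c₂⌉ in the generators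
(b_i)_{i∈F₁∪F₂}, where ⌈·⌉ is the coefficientwise ceiling with respect to
F₁ ∪ F₂. -/
noncomputable def epsCoeff {d m : ℕ} (b : Fin m → Fin d → ℤ)
    (F₁ F₂ : Finset (Fin m)) (c₁ c₂ : Fin d → ℤ) : Fin m → ℤ :=
  fun i => ⌈coeffOf b (F₁ ∪ F₂) c₁ i⌉ + ⌈coeffOf b (F₁ ∪ F₂) c₂ i⌉
    - ⌈coeffOf b (F₁ ∪ F₂) (c₁ + c₂) i⌉

section Prod
variable {d m : ℕ} (b : Fin m → Fin d → ℤ)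

lemma castQ_intsum (F : Finset (Fin m)) (ε : Fin m → ℤ) :
    castQ (∑ i ∈ F, ε i • b i) = ∑ i ∈ F, (ε i : ℚ) • castQ (b i) := by
  funext j
  simp only [castQ, Finset.sum_apply, Pi.smul_apply, smul_eq_mul]
  push_cast
  rfl

lemma prodFacts {p q : (Fin d → ℤ) × Finset (Fin m)}
    (hp : p ∈ multiFanPairs b) (hq : q ∈ multiFanPairs b)
    {G : Finset (Fin m)} (hsub : p.2 ∪ q.2 ⊆ G)
    (hG : LinearIndependent ℚ (fun i : G => castQ (b i.1))) :
    (∀ i, epsCoeff b p.2 q.2 p.1 q.1 i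
        = ⌈coeffOf b G p.1 i⌉ + ⌈coeffOf b G q.1 i⌉
          - ⌈coeffOf b G p.1 i + coeffOf b G q.1 i⌉) ∧
    (coeffOf b G (p.1 + q.1 + ∑ i ∈ p.2 ∪ q.2, epsCoeff b p.2 q.2 p.1 q.1 i • b i)
        = fun i => coeffOf b G p.1 i + coeffOf b G q.1 i
            + (epsCoeff b p.2 q.2 p.1 q.1 i : ℚ)) ∧
    ((p.1 + q.1 + ∑ i ∈ p.2 ∪ q.2, epsCoeff b p.2 q.2 p.1 q.1 i • b i, p.2 ∪ q.2)
        ∈ multiFanPairs b) ∧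
    (∀ i ∉ p.2 ∪ q.2, epsCoeff b p.2 q.2 p.1 q.1 i = 0) := by
  have hpF : p.2 ⊆ p.2 ∪ q.2 := Finset.subset_union_left
  have hqF : q.2 ⊆ p.2 ∪ q.2 := Finset.subset_union_right
  have hpG : p.2 ⊆ G := hpF.trans hsub
  have hqG : q.2 ⊆ G := hqF.trans hsub
  have hF : LinearIndependent ℚ (fun i : (p.2 ∪ q.2 : Finset (Fin m)) => castQ (b i.1)) :=
    li_subset b hsub hG
  set X := coeffOf b G p.1 with hX
  set Y := coeffOf b G q.1 with hY
  set ε := epsCoeff b p.2 q.2 p.1 q.1 with hε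
  have hXa : coeffOf b (p.2 ∪ q.2) p.1 = X := coeff_agree b hp hpF hpG hF hG
  have hYa : coeffOf b (p.2 ∪ q.2) q.1 = Y := coeff_agree b hq hqF hqG hF hG
  have hX0 : ∀ i ∉ p.2, X i = 0 := (mem_rep b hp hpG hG).1
  have hY0 : ∀ i ∉ q.2, Y i = 0 := (mem_rep b hq hqG hG).1
  have hXpos : ∀ i ∈ p.2, 0 < X i := (mem_rep b hp hpG hG).2.1
  have hYpos : ∀ i ∈ q.2, 0 < Y i := (mem_rep b hq hqG hG).2.1
  have hXnn : ∀ i, 0 ≤ X i := coeffOf_nonneg b hp hpG hG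
  have hYnn : ∀ i, 0 ≤ Y i := coeffOf_nonneg b hq hqG hG
  have hsumF : coeffOf b (p.2 ∪ q.2) (p.1 + q.1)
      = coeffOf b (p.2 ∪ q.2) p.1 + coeffOf b (p.2 ∪ q.2) q.1 :=
    coeffOf_add b hF (mem_rep b hp hpF hF).2.2 (mem_rep b hq hqF hF).2.2
  have ha : ∀ i, ε i = ⌈X i⌉ + ⌈Y i⌉ - ⌈X i + Y i⌉ := by
    intro i
    show ⌈coeffOf b (p.2 ∪ q.2) p.1 i⌉ + ⌈coeffOf b (p.2 ∪ q.2) q.1 i⌉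
        - ⌈coeffOf b (p.2 ∪ q.2) (p.1 + q.1) i⌉ = _
    rw [hsumF, hXa, hYa]; rfl
  have hd : ∀ i ∉ p.2 ∪ q.2, ε i = 0 := by
    intro i hi
    have h1 : X i = 0 := hX0 i (fun h => hi (hpF h))
    have h2 : Y i = 0 := hY0 i (fun h => hi (hqF h))
    rw [ha i, h1, h2]; norm_num
  have hεnn : ∀ i, 0 ≤ ε i := fun i => (ha i) ▸ ceil_e_nonneg (X i) (Y i)
  -- representations over F with coefficients X, Y
  have hrepX : castQ p.1 = ∑ i ∈ p.2 ∪ q.2, X i • castQ (b i) := by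
    rw [← hXa]; exact (mem_rep b hp hpF hF).2.2
  have hrepY : castQ q.1 = ∑ i ∈ p.2 ∪ q.2, Y i • castQ (b i) := by
    rw [← hYa]; exact (mem_rep b hq hqF hF).2.2
  have hrepF : castQ (p.1 + q.1 + ∑ i ∈ p.2 ∪ q.2, ε i • b i)
      = ∑ i ∈ p.2 ∪ q.2, (X i + Y i + (ε i : ℚ)) • castQ (b i) := by
    rw [castQ_add, castQ_add, castQ_intsum, hrepX, hrepY]
    rw [← Finset.sum_add_distrib, ← Finset.sum_add_distrib]
    exact Finset.sum_congr rfl (fun i _ => by rw [add_smul, add_smul])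
  have hmem : (p.1 + q.1 + ∑ i ∈ p.2 ∪ q.2, ε i • b i, p.2 ∪ q.2) ∈ multiFanPairs b := by
    refine ⟨hF, fun i => X i + Y i + (ε i : ℚ), ?_, hrepF⟩
    intro i hi
    have hcast : (0 : ℚ) ≤ (ε i : ℚ) := by exact_mod_cast hεnn i
    show (0:ℚ) < X i + Y i + (ε i : ℚ)
    rcases Finset.mem_union.1 hi with h | h
    · have := hXpos i h; have := hYnn i; linarith
    · have := hYpos i h; have := hXnn i; linarith
  have hb : coeffOf b G (p.1 + q.1 + ∑ i ∈ p.2 ∪ q.2, ε i • b i)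
      = fun i => X i + Y i + (ε i : ℚ) := by
    refine coeffOf_eq b hG ?_ ?_
    · intro i hi
      have h1 : X i = 0 := hX0 i (fun h => hi (hpG h))
      have h2 : Y i = 0 := hY0 i (fun h => hi (hqG h))
      have h3 : ε i = 0 := hd i (fun h => hi (hsub h))
      rw [h1, h2, h3]; norm_num
    · rw [hrepF]
      refine Finset.sum_subset hsub ?_
      intro i _ hi
      have h1 : X i = 0 := hX0 i (fun h => hi (hpF h))
      have h2 : Y i = 0 := hY0 i (fun h => hi (hqF h))
      have h3 : ε i = 0 := hd i hi
      rw [h1, h2, h3]; norm_num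
  exact ⟨ha, hb, hmem, hd⟩

lemma eps_bounds {p q : (Fin d → ℤ) × Finset (Fin m)}
    (hp : p ∈ multiFanPairs b) (hq : q ∈ multiFanPairs b)
    {G : Finset (Fin m)} (hsub : p.2 ∪ q.2 ⊆ G)
    (hG : LinearIndependent ℚ (fun i : G => castQ (b i.1))) :
    ∀ i, 0 ≤ epsCoeff b p.2 q.2 p.1 q.1 i ∧ epsCoeff b p.2 q.2 p.1 q.1 i ≤ 1 := by
  intro i
  rw [(prodFacts b hp hq hsub hG).1 i]
  exact ⟨ceil_e_nonneg _ _, ceil_e_le_one _ _⟩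

end Prod


/-- The product of two basis elements y^{(c₁,F₁)}, y^{(c₂,F₂)} of ℚ[Δ_β]:
(−1)^{|σ_ε|} y^{(c₁+c₂+ε, F₁∪F₂)} if (b_i)_{i∈F₁∪F₂} is ℚ-linearly
independent, and 0 otherwise; here ε = ⌈c₁⌉ + ⌈c₂⌉ − ⌈c₁+c₂⌉ and σ_ε is the
set of indices of F₁∪F₂ at which the coefficient of ε is nonzero. -/
noncomputable def multiFanMulB {d m : ℕ} (b : Fin m → Fin d → ℤ)
    (p q : (Fin d → ℤ) × Finset (Fin m)) :
    ((Fin d → ℤ) × Finset (Fin m)) →₀ ℚ :=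
  if LinearIndependent ℚ (fun i : (p.2 ∪ q.2 : Finset (Fin m)) => castQ (b i.1))
  then
    ((-1 : ℚ) ^
        ((p.2 ∪ q.2).filter (fun i => epsCoeff b p.2 q.2 p.1 q.1 i ≠ 0)).card) •
      Finsupp.single
        (p.1 + q.1 + ∑ i ∈ p.2 ∪ q.2, epsCoeff b p.2 q.2 p.1 q.1 i • b i,
          p.2 ∪ q.2) 1
  else 0

/-- The bilinear extension of `multiFanMulB` to ℚ[Δ_β] = ⊕_{(c,F)} ℚ·y^{(c,F)}. -/
noncomputable def multiFanMul {d m : ℕ} (b : Fin m → Fin d → ℤ)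
    (f g : ((Fin d → ℤ) × Finset (Fin m)) →₀ ℚ) :
    ((Fin d → ℤ) × Finset (Fin m)) →₀ ℚ :=
  f.sum fun p a => g.sum fun q c => (a * c) • multiFanMulB b p q

section Mul
variable {d m : ℕ} (b : Fin m → Fin d → ℤ)

lemma epsCoeff_comm (p q : (Fin d → ℤ) × Finset (Fin m)) :
    epsCoeff b q.2 p.2 q.1 p.1 = epsCoeff b p.2 q.2 p.1 q.1 := by
  funext i
  unfold epsCoeff
  rw [Finset.union_comm q.2 p.2, add_comm q.1 p.1]
  ring

lemma mulB_comm (p q : (Fin d → ℤ) × Finset (Fin m)) :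
    multiFanMulB b p q = multiFanMulB b q p := by
  unfold multiFanMulB
  rw [epsCoeff_comm b p q, Finset.union_comm q.2 p.2, add_comm q.1 p.1]

lemma mulF_comm' (f g : ((Fin d → ℤ) × Finset (Fin m)) →₀ ℚ) :
    multiFanMul b f g = multiFanMul b g f := by
  unfold multiFanMul
  rw [Finsupp.sum_comm]
  refine Finsupp.sum_congr (fun q _ => Finsupp.sum_congr (fun p _ => ?_))
  rw [mul_comm, mulB_comm b q p]

lemma mul_zero_left (g : ((Fin d → ℤ) × Finset (Fin m)) →₀ ℚ) :
    multiFanMul b 0 g = 0 := by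
  unfold multiFanMul
  exact Finsupp.sum_zero_index

lemma mul_single_single (p q : (Fin d → ℤ) × Finset (Fin m)) (a c : ℚ) :
    multiFanMul b (Finsupp.single p a) (Finsupp.single q c)
      = (a * c) • multiFanMulB b p q := by
  unfold multiFanMul
  rw [Finsupp.sum_single_index (h_zero := by simp)]
  rw [Finsupp.sum_single_index (h_zero := by simp)]

lemma mul_add_left (f₁ f₂ g : ((Fin d → ℤ) × Finset (Fin m)) →₀ ℚ) :
    multiFanMul b (f₁ + f₂) g = multiFanMul b f₁ g + multiFanMul b f₂ g := by
  unfold multiFanMul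
  refine Finsupp.sum_add_index' (fun p => by simp) (fun p a₁ a₂ => ?_)
  rw [← Finsupp.sum_add]
  refine Finsupp.sum_congr (fun q _ => ?_)
  rw [add_mul, add_smul]

lemma mul_smul_left (s : ℚ) (f g : ((Fin d → ℤ) × Finset (Fin m)) →₀ ℚ) :
    multiFanMul b (s • f) g = s • multiFanMul b f g := by
  unfold multiFanMul
  rw [Finsupp.sum_smul_index' (fun p => by simp), Finsupp.smul_sum]
  refine Finsupp.sum_congr (fun p _ => ?_)
  rw [Finsupp.smul_sum]
  refine Finsupp.sum_congr (fun q _ => ?_)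
  rw [smul_eq_mul, smul_smul, mul_assoc]

lemma mul_zero_right (f : ((Fin d → ℤ) × Finset (Fin m)) →₀ ℚ) :
    multiFanMul b f 0 = 0 := by
  rw [mulF_comm', mul_zero_left]

lemma mul_add_right (f g₁ g₂ : ((Fin d → ℤ) × Finset (Fin m)) →₀ ℚ) :
    multiFanMul b f (g₁ + g₂) = multiFanMul b f g₁ + multiFanMul b f g₂ := by
  rw [mulF_comm', mul_add_left, mulF_comm' b g₁ f, mulF_comm' b g₂ f]

lemma mul_smul_right (s : ℚ) (f g : ((Fin d → ℤ) × Finset (Fin m)) →₀ ℚ) :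
    multiFanMul b f (s • g) = s • multiFanMul b f g := by
  rw [mulF_comm', mul_smul_left, mulF_comm' b g f]

lemma mul_finsuppsum_left {ι : Type*} {M : Type*} [Zero M] (f : ι →₀ M)
    (F : ι → M → ((Fin d → ℤ) × Finset (Fin m)) →₀ ℚ)
    (g : ((Fin d → ℤ) × Finset (Fin m)) →₀ ℚ) :
    multiFanMul b (f.sum F) g = f.sum fun i a => multiFanMul b (F i a) g := by
  let Φ : (((Fin d → ℤ) × Finset (Fin m)) →₀ ℚ) →+ (((Fin d → ℤ) × Finset (Fin m)) →₀ ℚ) :=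
    ⟨⟨fun x => multiFanMul b x g, mul_zero_left b g⟩, fun x y => mul_add_left b x y g⟩
  exact map_sum Φ (fun i => F i (f i)) f.support

lemma mul_finsuppsum_right {ι : Type*} {M : Type*} [Zero M] (f : ι →₀ M)
    (F : ι → M → ((Fin d → ℤ) × Finset (Fin m)) →₀ ℚ)
    (g : ((Fin d → ℤ) × Finset (Fin m)) →₀ ℚ) :
    multiFanMul b g (f.sum F) = f.sum fun i a => multiFanMul b g (F i a) := by
  rw [mulF_comm', mul_finsuppsum_left]
  exact Finsupp.sum_congr (fun i _ => mulF_comm' b (F i (f i)) g)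

lemma mul_right_expand (Y h : ((Fin d → ℤ) × Finset (Fin m)) →₀ ℚ) :
    multiFanMul b Y h = h.sum fun r e => e • multiFanMul b Y (Finsupp.single r 1) := by
  conv_lhs => rw [← Finsupp.sum_single h]
  rw [mul_finsuppsum_right]
  refine Finsupp.sum_congr (fun r _ => ?_)
  rw [show Finsupp.single r (h r) = (h r) • Finsupp.single r (1:ℚ) by
        rw [Finsupp.smul_single, smul_eq_mul, mul_one],
    mul_smul_right]

lemma mul_left_expand (f Z : ((Fin d → ℤ) × Finset (Fin m)) →₀ ℚ) :
    multiFanMul b f Z = f.sum fun p a => a • multiFanMul b (Finsupp.single p 1) Z := by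
  conv_lhs => rw [← Finsupp.sum_single f]
  rw [mul_finsuppsum_left]
  refine Finsupp.sum_congr (fun p _ => ?_)
  rw [show Finsupp.single p (f p) = (f p) • Finsupp.single p (1:ℚ) by
        rw [Finsupp.smul_single, smul_eq_mul, mul_one],
    mul_smul_left]

end Mul


section Key
variable {d m : ℕ} (b : Fin m → Fin d → ℤ)

lemma mulB_pos' (p q : (Fin d → ℤ) × Finset (Fin m))
    (h : LinearIndependent ℚ (fun i : (p.2 ∪ q.2 : Finset (Fin m)) => castQ (b i.1))) :
    multiFanMulB b p q
      = ((-1 : ℚ) ^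
          ((p.2 ∪ q.2).filter (fun i => epsCoeff b p.2 q.2 p.1 q.1 i ≠ 0)).card) •
        Finsupp.single
          (p.1 + q.1 + ∑ i ∈ p.2 ∪ q.2, epsCoeff b p.2 q.2 p.1 q.1 i • b i,
            p.2 ∪ q.2) 1 := by
  unfold multiFanMulB
  rw [if_pos h]

lemma mulB_neg' (p q : (Fin d → ℤ) × Finset (Fin m))
    (h : ¬ LinearIndependent ℚ (fun i : (p.2 ∪ q.2 : Finset (Fin m)) => castQ (b i.1))) :
    multiFanMulB b p q = 0 := by
  unfold multiFanMulB
  rw [if_neg h]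

set_option maxHeartbeats 2000000 in
lemma triple_left (p q r : (Fin d → ℤ) × Finset (Fin m))
    (hp : p ∈ multiFanPairs b) (hq : q ∈ multiFanPairs b) (hr : r ∈ multiFanPairs b)
    (hU : LinearIndependent ℚ
      (fun i : (p.2 ∪ q.2 ∪ r.2 : Finset (Fin m)) => castQ (b i.1))) :
    multiFanMul b (multiFanMulB b p q) (Finsupp.single r 1)
      = ((-1 : ℚ) ^ (∑ i ∈ p.2 ∪ q.2 ∪ r.2,
            (⌈coeffOf b (p.2 ∪ q.2 ∪ r.2) p.1 i⌉ + ⌈coeffOf b (p.2 ∪ q.2 ∪ r.2) q.1 i⌉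
              + ⌈coeffOf b (p.2 ∪ q.2 ∪ r.2) r.1 i⌉
              - ⌈coeffOf b (p.2 ∪ q.2 ∪ r.2) p.1 i + coeffOf b (p.2 ∪ q.2 ∪ r.2) q.1 i
                  + coeffOf b (p.2 ∪ q.2 ∪ r.2) r.1 i⌉)).toNat) •
        Finsupp.single
          (p.1 + q.1 + r.1 + ∑ i ∈ p.2 ∪ q.2 ∪ r.2,
            (⌈coeffOf b (p.2 ∪ q.2 ∪ r.2) p.1 i⌉ + ⌈coeffOf b (p.2 ∪ q.2 ∪ r.2) q.1 i⌉
              + ⌈coeffOf b (p.2 ∪ q.2 ∪ r.2) r.1 i⌉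
              - ⌈coeffOf b (p.2 ∪ q.2 ∪ r.2) p.1 i + coeffOf b (p.2 ∪ q.2 ∪ r.2) q.1 i
                  + coeffOf b (p.2 ∪ q.2 ∪ r.2) r.1 i⌉) • b i,
            p.2 ∪ q.2 ∪ r.2) 1 := by
  have hpqU : p.2 ∪ q.2 ⊆ p.2 ∪ q.2 ∪ r.2 := Finset.subset_union_left
  have hpq : LinearIndependent ℚ
      (fun i : (p.2 ∪ q.2 : Finset (Fin m)) => castQ (b i.1)) := li_subset b hpqU hU
  obtain ⟨F1a, F1b, F1c, F1d⟩ := prodFacts b hp hq hpqU hU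
  obtain ⟨F2a, F2b, F2c, F2d⟩ := prodFacts b F1c hr (Finset.Subset.refl _) hU
  -- abbreviations (proof-level, via have of reduced types)
  set U := p.2 ∪ q.2 ∪ r.2 with hUdef
  set X := coeffOf b U p.1 with hX
  set Y := coeffOf b U q.1 with hY
  set Z := coeffOf b U r.1 with hZ
  set ε₁ := epsCoeff b p.2 q.2 p.1 q.1 with hε₁
  set v₁ : Fin d → ℤ := p.1 + q.1 + ∑ i ∈ p.2 ∪ q.2, ε₁ i • b i with hv₁
  have F2a' : ∀ i, epsCoeff b (p.2 ∪ q.2) r.2 v₁ r.1 i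
      = ⌈coeffOf b U v₁ i⌉ + ⌈Z i⌉ - ⌈coeffOf b U v₁ i + Z i⌉ := F2a
  set ε₂ := epsCoeff b (p.2 ∪ q.2) r.2 v₁ r.1 with hε₂def
  have hVt : coeffOf b U v₁ = fun i => X i + Y i + (ε₁ i : ℚ) := F1b
  -- ceiling calculations
  have hceil1 : ∀ i, ⌈X i + Y i + (ε₁ i : ℚ)⌉ = ⌈X i⌉ + ⌈Y i⌉ := by
    intro i
    rw [Int.ceil_add_intCast, F1a i]
    ring
  have hceil2 : ∀ i, ⌈X i + Y i + (ε₁ i : ℚ) + Z i⌉ = ⌈X i + Y i + Z i⌉ + ε₁ i := by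
    intro i
    rw [show X i + Y i + (ε₁ i : ℚ) + Z i = X i + Y i + Z i + (ε₁ i : ℚ) by ring,
      Int.ceil_add_intCast]
  have hε₂ : ∀ i, ε₂ i = ⌈X i⌉ + ⌈Y i⌉ + ⌈Z i⌉ - (⌈X i + Y i + Z i⌉ + ε₁ i) := by
    intro i
    rw [F2a' i, hVt]
    simp only []
    rw [hceil1 i, hceil2 i]
  have hE : ∀ i, ε₁ i + ε₂ i
      = ⌈X i⌉ + ⌈Y i⌉ + ⌈Z i⌉ - ⌈X i + Y i + Z i⌉ := by
    intro i; rw [hε₂ i]; ring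
  -- rewrite the product
  rw [mulB_pos' b p q hpq, mul_smul_left, mul_single_single, one_mul, one_smul]
  have hBtr : multiFanMulB b (v₁, p.2 ∪ q.2) r
      = ((-1 : ℚ) ^ (((p.2 ∪ q.2) ∪ r.2).filter (fun i => ε₂ i ≠ 0)).card) •
        Finsupp.single (v₁ + r.1 + ∑ i ∈ (p.2 ∪ q.2) ∪ r.2, ε₂ i • b i,
          (p.2 ∪ q.2) ∪ r.2) 1 := mulB_pos' b (v₁, p.2 ∪ q.2) r hU
  rw [hBtr, smul_smul, ← pow_add]
  -- the vector
  have hsum1 : ∑ i ∈ p.2 ∪ q.2, ε₁ i • b i = ∑ i ∈ U, ε₁ i • b i :=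
    Finset.sum_subset hpqU (fun i _ hi => by rw [F1d i hi, zero_smul])
  have hvec : v₁ + r.1 + ∑ i ∈ U, ε₂ i • b i
      = p.1 + q.1 + r.1 + ∑ i ∈ U,
          (⌈X i⌉ + ⌈Y i⌉ + ⌈Z i⌉ - ⌈X i + Y i + Z i⌉) • b i := by
    have hsum2 : ∑ i ∈ U, ε₁ i • b i + ∑ i ∈ U, ε₂ i • b i
        = ∑ i ∈ U, (⌈X i⌉ + ⌈Y i⌉ + ⌈Z i⌉ - ⌈X i + Y i + Z i⌉) • b i := by
      rw [← Finset.sum_add_distrib]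
      exact Finset.sum_congr rfl (fun i _ => by rw [← add_smul, hE i])
    rw [hv₁, hsum1, ← hsum2]
    abel
  -- the sign
  have hb₁ : ∀ i, 0 ≤ ε₁ i ∧ ε₁ i ≤ 1 := eps_bounds b hp hq hpqU hU
  have hb₂ : ∀ i, 0 ≤ ε₂ i ∧ ε₂ i ≤ 1 := fun i => by
    rw [F2a' i]; exact ⟨ceil_e_nonneg _ _, ceil_e_le_one _ _⟩
  have hc₁ : (((p.2 ∪ q.2).filter (fun i => ε₁ i ≠ 0)).card : ℤ) = ∑ i ∈ U, ε₁ i := by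
    rw [card_filter_eq_sum (fun i => (hb₁ i).1) (fun i => (hb₁ i).2)]
    exact Finset.sum_subset hpqU (fun i _ hi => F1d i hi)
  have hc₂ : ((U.filter (fun i => ε₂ i ≠ 0)).card : ℤ) = ∑ i ∈ U, ε₂ i :=
    card_filter_eq_sum (fun i => (hb₂ i).1) (fun i => (hb₂ i).2)
  have hcard : (((p.2 ∪ q.2).filter (fun i => ε₁ i ≠ 0)).card
        + (U.filter (fun i => ε₂ i ≠ 0)).card : ℤ)
      = ∑ i ∈ U, (⌈X i⌉ + ⌈Y i⌉ + ⌈Z i⌉ - ⌈X i + Y i + Z i⌉) := by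
    push_cast [hc₁, hc₂]
    rw [← Finset.sum_add_distrib]
    exact Finset.sum_congr rfl (fun i _ => hE i)
  have hexp : ((p.2 ∪ q.2).filter (fun i => ε₁ i ≠ 0)).card
        + (U.filter (fun i => ε₂ i ≠ 0)).card
      = (∑ i ∈ U, (⌈X i⌉ + ⌈Y i⌉ + ⌈Z i⌉ - ⌈X i + Y i + Z i⌉)).toNat := by
    omega
  rw [hexp, hvec]

end Key


section Key2
variable {d m : ℕ} (b : Fin m → Fin d → ℤ)

set_option maxHeartbeats 2000000 in
lemma key (p q r : (Fin d → ℤ) × Finset (Fin m))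
    (hp : p ∈ multiFanPairs b) (hq : q ∈ multiFanPairs b) (hr : r ∈ multiFanPairs b) :
    multiFanMul b (multiFanMulB b p q) (Finsupp.single r 1)
      = multiFanMul b (Finsupp.single p 1) (multiFanMulB b q r) := by
  by_cases hU : LinearIndependent ℚ
      (fun i : (p.2 ∪ q.2 ∪ r.2 : Finset (Fin m)) => castQ (b i.1))
  · have hGG : q.2 ∪ r.2 ∪ p.2 = p.2 ∪ q.2 ∪ r.2 := by
      rw [Finset.union_comm (q.2 ∪ r.2) p.2, ← Finset.union_assoc]
    have hU2 : LinearIndependent ℚ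
        (fun i : (q.2 ∪ r.2 ∪ p.2 : Finset (Fin m)) => castQ (b i.1)) := by
      rw [hGG]; exact hU
    rw [triple_left b p q r hp hq hr hU,
      mulF_comm' b (Finsupp.single p 1) (multiFanMulB b q r),
      triple_left b q r p hq hr hp hU2]
    rw [hGG]
    congr 1
    · congr 2
      refine Finset.sum_congr rfl (fun i _ => ?_)
      congr 1
      · ring
      · congr 1; ring
    · congr 1
      rw [show q.1 + r.1 + p.1 = p.1 + q.1 + r.1 from by abel]
      congr 1
      congr 1
      refine Finset.sum_congr rfl (fun i _ => ?_)
      congr 1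
      congr 1
      · ring
      · congr 1; ring
  · have hU2 : ¬ LinearIndependent ℚ
        (fun i : ((p.2 ∪ (q.2 ∪ r.2)) : Finset (Fin m)) => castQ (b i.1)) := by
      intro h; apply hU; rw [← Finset.union_assoc] at h; exact h
    have hL : multiFanMul b (multiFanMulB b p q) (Finsupp.single r 1) = 0 := by
      by_cases hpq : LinearIndependent ℚ
          (fun i : ((p.2 ∪ q.2) : Finset (Fin m)) => castQ (b i.1))
      · rw [mulB_pos' b p q hpq, mul_smul_left, mul_single_single, one_mul, one_smul]
        rw [show multiFanMulB b
            (p.1 + q.1 + ∑ i ∈ p.2 ∪ q.2, epsCoeff b p.2 q.2 p.1 q.1 i • b i,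
              p.2 ∪ q.2) r = 0 from mulB_neg' b _ r hU, smul_zero]
      · rw [mulB_neg' b p q hpq, mul_zero_left]
    have hR : multiFanMul b (Finsupp.single p 1) (multiFanMulB b q r) = 0 := by
      by_cases hqr : LinearIndependent ℚ
          (fun i : ((q.2 ∪ r.2) : Finset (Fin m)) => castQ (b i.1))
      · rw [mulB_pos' b q r hqr, mul_smul_right, mul_single_single, one_mul, one_smul]
        rw [show multiFanMulB b p
            (q.1 + r.1 + ∑ i ∈ q.2 ∪ r.2, epsCoeff b q.2 r.2 q.1 r.1 i • b i,
              q.2 ∪ r.2) = 0 from mulB_neg' b p _ hU2, smul_zero]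
      · rw [mulB_neg' b q r hqr, mul_zero_right]
    rw [hL, hR]

end Key2


section Assemble
variable {d m : ℕ} (b : Fin m → Fin d → ℤ)

set_option maxHeartbeats 1000000 in
lemma mul_assoc' (f g h : ((Fin d → ℤ) × Finset (Fin m)) →₀ ℚ)
    (hf : ↑f.support ⊆ multiFanPairs b) (hg : ↑g.support ⊆ multiFanPairs b)
    (hh : ↑h.support ⊆ multiFanPairs b) :
    multiFanMul b (multiFanMul b f g) h = multiFanMul b f (multiFanMul b g h) := by
  have e1 : multiFanMul b (multiFanMul b f g) h
      = f.sum fun p a => g.sum fun q c => h.sum fun r e =>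
          ((a * c) * e) • multiFanMul b (multiFanMulB b p q) (Finsupp.single r 1) := by
    rw [show multiFanMul b f g
        = f.sum fun p a => g.sum fun q c => (a * c) • multiFanMulB b p q from rfl]
    rw [mul_finsuppsum_left]
    refine Finsupp.sum_congr (fun p _ => ?_)
    rw [mul_finsuppsum_left]
    refine Finsupp.sum_congr (fun q _ => ?_)
    rw [mul_smul_left, mul_right_expand, Finsupp.smul_sum]
    refine Finsupp.sum_congr (fun r _ => ?_)
    rw [smul_smul]
  have e2 : multiFanMul b f (multiFanMul b g h)
      = g.sum fun q c => h.sum fun r e => f.sum fun p a =>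
          ((c * e) * a) • multiFanMul b (Finsupp.single p 1) (multiFanMulB b q r) := by
    rw [show multiFanMul b g h
        = g.sum fun q c => h.sum fun r e => (c * e) • multiFanMulB b q r from rfl]
    rw [mul_finsuppsum_right]
    refine Finsupp.sum_congr (fun q _ => ?_)
    rw [mul_finsuppsum_right]
    refine Finsupp.sum_congr (fun r _ => ?_)
    rw [mul_smul_right, mul_left_expand, Finsupp.smul_sum]
    refine Finsupp.sum_congr (fun p _ => ?_)
    rw [smul_smul]
  refine e1.trans (Eq.trans ?_ e2.symm)
  rw [Finsupp.sum_comm f g (fun p a q c => h.sum fun r e =>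
    ((a * c) * e) • multiFanMul b (multiFanMulB b p q) (Finsupp.single r 1))]
  refine Finsupp.sum_congr (fun q hq => ?_)
  rw [Finsupp.sum_comm f h (fun p a r e =>
    ((a * g q) * e) • multiFanMul b (multiFanMulB b p q) (Finsupp.single r 1))]
  refine Finsupp.sum_congr (fun r hr => ?_)
  refine Finsupp.sum_congr (fun p hp => ?_)
  rw [key b p q r (hf hp) (hg hq) (hh hr)]
  rw [show (f p * g q) * h r = (g q * h r) * f p from by ring]

lemma mulB_support (p q : (Fin d → ℤ) × Finset (Fin m))
    (hp : p ∈ multiFanPairs b) (hq : q ∈ multiFanPairs b) :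
    ↑(multiFanMulB b p q).support ⊆ multiFanPairs b := by
  by_cases h : LinearIndependent ℚ
      (fun i : (p.2 ∪ q.2 : Finset (Fin m)) => castQ (b i.1))
  · rw [mulB_pos' b p q h]
    intro x hx
    simp only [Finset.mem_coe] at hx
    have h1 := Finsupp.support_smul hx
    have h2 := Finsupp.support_single_subset h1
    rw [Finset.mem_singleton] at h2
    subst h2
    exact (prodFacts b hp hq (Finset.Subset.refl _) h).2.2.1
  · rw [mulB_neg' b p q h]
    simp

lemma mul_support (f g : ((Fin d → ℤ) × Finset (Fin m)) →₀ ℚ)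
    (hf : ↑f.support ⊆ multiFanPairs b) (hg : ↑g.support ⊆ multiFanPairs b) :
    ↑(multiFanMul b f g).support ⊆ multiFanPairs b := by
  intro x hx
  simp only [Finset.mem_coe] at hx
  have h1 := Finsupp.support_sum hx
  obtain ⟨p, hp, h2⟩ := Finset.mem_biUnion.1 h1
  have h3 := Finsupp.support_sum h2
  obtain ⟨q, hq, h4⟩ := Finset.mem_biUnion.1 h3
  have h5 := Finsupp.support_smul h4
  exact mulB_support b p q (hf hp) (hg hq) h5

lemma unit_left (f : ((Fin d → ℤ) × Finset (Fin m)) →₀ ℚ)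
    (hf : ↑f.support ⊆ multiFanPairs b) :
    multiFanMul b (Finsupp.single ((0 : Fin d → ℤ), (∅ : Finset (Fin m))) 1) f = f := by
  unfold multiFanMul
  rw [Finsupp.sum_single_index (h_zero := by simp)]
  conv_rhs => rw [← Finsupp.sum_single f]
  refine Finsupp.sum_congr (fun q hq => ?_)
  have hqP : q ∈ multiFanPairs b := hf hq
  have hli : LinearIndependent ℚ
      (fun i : ((∅ ∪ q.2 : Finset (Fin m))) => castQ (b i.1)) := by
    rw [Finset.empty_union]; exact hqP.1
  have hBq : multiFanMulB b ((0 : Fin d → ℤ), (∅ : Finset (Fin m))) q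
      = Finsupp.single q 1 := by
    rw [mulB_pos' b ((0 : Fin d → ℤ), (∅ : Finset (Fin m))) q hli]
    have hco : coeffOf b ((∅ ∪ q.2 : Finset (Fin m))) (0 : Fin d → ℤ) = 0 :=
      coeffOf_eq b hli (fun i _ => rfl)
        (by funext j; simp [castQ])
    have heps : ∀ i, epsCoeff b (∅ : Finset (Fin m)) q.2 (0 : Fin d → ℤ) q.1 i = 0 := by
      intro i
      unfold epsCoeff
      rw [hco, zero_add]
      simp
    have hfil : (((∅ : Finset (Fin m)) ∪ q.2).filter
        (fun i => epsCoeff b ∅ q.2 0 q.1 i ≠ 0)) = ∅ :=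
      Finset.filter_false_of_mem (fun i _ => by simp [heps i])
    have hsum0 : (∑ i ∈ ((∅ : Finset (Fin m)) ∪ q.2),
        epsCoeff b ∅ q.2 0 q.1 i • b i) = 0 :=
      Finset.sum_eq_zero (fun i _ => by rw [heps i, zero_smul])
    rw [hfil, hsum0]
    simp only [Finset.card_empty, pow_zero, one_smul, zero_add, add_zero,
      Finset.empty_union]
  rw [hBq, one_mul, Finsupp.smul_single, smul_eq_mul, mul_one]

end Assemble

/-- The deformed multi-fan group ring ℚ[Δ_β] (Section 3.4): the product (3.10)
is well defined (it preserves the span of {y^{(c,F)} : (c,F) ∈ N^{Δ_β}}),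
commutative and associative, and y^{(0,∅)} is a unit; hence ℚ[Δ_β] is a
commutative associative unital ℚ-algebra. -/
theorem multiFan_ring_structure {d m : ℕ} (b : Fin m → Fin d → ℤ) :
    (∀ f g : ((Fin d → ℤ) × Finset (Fin m)) →₀ ℚ,
      ↑f.support ⊆ multiFanPairs b → ↑g.support ⊆ multiFanPairs b →
      ↑(multiFanMul b f g).support ⊆ multiFanPairs b) ∧
    (∀ f g : ((Fin d → ℤ) × Finset (Fin m)) →₀ ℚ,
      multiFanMul b f g = multiFanMul b g f) ∧
    (∀ f g h : ((Fin d → ℤ) × Finset (Fin m)) →₀ ℚ,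
      ↑f.support ⊆ multiFanPairs b → ↑g.support ⊆ multiFanPairs b →
      ↑h.support ⊆ multiFanPairs b →
      multiFanMul b (multiFanMul b f g) h = multiFanMul b f (multiFanMul b g h)) ∧
    (∀ f : ((Fin d → ℤ) × Finset (Fin m)) →₀ ℚ,
      ↑f.support ⊆ multiFanPairs b →
      multiFanMul b (Finsupp.single (0, ∅) 1) f = f ∧
      multiFanMul b f (Finsupp.single (0, ∅) 1) = f) := by
  refine ⟨fun f g hf hg => mul_support b f g hf hg,
    fun f g => mulF_comm' b f g,
    fun f g h hf hg hh => mul_assoc' b f g h hf hg hh,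
    fun f hf => ⟨unit_left b f hf, ?_⟩⟩
  rw [mulF_comm']
  exact unit_left b f hf
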